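/- A nonzero submodule N of an R-module M is weakly second if and only if N is strongly 2-absorbing second and Ann_R(N) is a prime ideal of R. -/
import Mathlib


open Pointwise

/-- A nonzero submodule `N` is weakly second if whenever `r s : R` and `K` is a
submodule with `r • s • N ⊆ K`, then `r • N ⊆ K` or `s • N ⊆ K`. -/
def IsWeaklySecond {R M : Type*} [CommRing R] [AddCommGroup M] [Module R M]
    (N : Submodule R M) : Prop :=
  N ≠ ⊥ ∧ ∀ (r s : R) (K : Submodule R M), r • s • N ≤ K → r • N ≤ K ∨ s • N ≤ K

/-- A nonzero submodule `N` is strongly 2-absorbing second: whenever `a b : R` and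
`K` is a submodule with `a • b • N ⊆ K`, then `a • N ⊆ K` or `b • N ⊆ K` or
`a • b • N = 0`. -/
def IsStrongly2AbsorbingSecond {R M : Type*} [CommRing R] [AddCommGroup M] [Module R M]
    (N : Submodule R M) : Prop :=
  N ≠ ⊥ ∧ ∀ (a b : R) (K : Submodule R M), a • b • N ≤ K →
    a • N ≤ K ∨ b • N ≤ K ∨ a • b • N = ⊥

lemma pointwise_smul_eq_bot_iff_mem_ann
    {R M : Type*} [CommRing R] [AddCommGroup M] [Module R M]
    (N : Submodule R M) (r : R) : r • N = ⊥ ↔ r ∈ N.annihilator := by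
  rw [Submodule.mem_annihilator, eq_bot_iff]
  constructor
  · intro h n hn
    exact (Submodule.mem_bot R).mp (h (Submodule.smul_mem_pointwise_smul n r N hn))
  · intro h x hx
    rw [← SetLike.mem_coe, Submodule.coe_pointwise_smul] at hx
    obtain ⟨n, hn, rfl⟩ := hx
    exact (Submodule.mem_bot R).mpr (h n hn)

theorem weaklySecond_iff
    {R M : Type*} [CommRing R] [AddCommGroup M] [Module R M]
    (N : Submodule R M) (hne : N ≠ ⊥) :
    IsWeaklySecond N ↔ IsStrongly2AbsorbingSecond N ∧ N.annihilator.IsPrime := by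
  constructor
  · rintro ⟨-, h⟩
    refine ⟨⟨hne, fun a b K hab => (h a b K hab).imp id Or.inl⟩, ?_, ?_⟩
    · intro htop
      apply hne
      rw [eq_bot_iff]
      intro n hn
      have : (1 : R) ∈ N.annihilator := htop ▸ Submodule.mem_top
      simpa using Submodule.mem_annihilator.mp this n hn
    · intro a b hab
      rw [← pointwise_smul_eq_bot_iff_mem_ann] at hab ⊢
      rw [← pointwise_smul_eq_bot_iff_mem_ann]
      rw [← smul_smul] at hab
      rcases h a b ⊥ hab.le with h1 | h1
      · exact Or.inl (le_bot_iff.mp h1)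
      · exact Or.inr (le_bot_iff.mp h1)
  · rintro ⟨⟨-, h⟩, hp⟩
    refine ⟨hne, fun r s K hrs => ?_⟩
    rcases h r s K hrs with h1 | h1 | h1
    · exact Or.inl h1
    · exact Or.inr h1
    · rw [smul_smul, pointwise_smul_eq_bot_iff_mem_ann] at h1
      rcases hp.mem_or_mem h1 with hr | hs
      · exact Or.inl ((pointwise_smul_eq_bot_iff_mem_ann N r).mpr hr ▸ bot_le)
      · exact Or.inr ((pointwise_smul_eq_bot_iff_mem_ann N s).mpr hs ▸ bot_le)
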